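/- Let u, v ∈ ℂⁿ be nonzero vectors and let l ∈ {1, …, n−1} satisfy λ_l ≥ ρ(u) ≥ λ_{l+1}. If |xⱼᴴv| ≥ |xⱼᴴu| for every j ∈ {1, …, l} and |xⱼᴴv| ≤ |xⱼᴴu| for every j ∈ {l+1, …, n}, then ρ(v) ≥ ρ(u). -/

import Mathlib

/-- The Rayleigh quotient `ρ(v) = (vᴴAv)/(vᴴv)` of the Hermitian matrix `A`. -/
noncomputable def rayleigh {n : ℕ} (A : Matrix (Fin n) (Fin n) ℂ)
    (v : EuclideanSpace ℂ (Fin n)) : ℝ :=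
  ((inner ℂ v (Matrix.toEuclideanLin A v) : ℂ)).re / ‖v‖ ^ 2

/-- The `i`-th largest Ritz value (1-indexed, `i ∈ {1, …, dim S}`) of the Hermitian
matrix `A` in the subspace `S`, characterized via the Courant–Fischer max-min
principle applied inside `S` (equivalently, the `i`-th largest eigenvalue of
`SᴴAS` for any orthonormal basis matrix `S`). -/
noncomputable def ritzValue {n : ℕ} (A : Matrix (Fin n) (Fin n) ℂ)
    (S : Submodule ℂ (EuclideanSpace ℂ (Fin n))) (i : ℕ) : ℝ :=
  sSup {r : ℝ | ∃ T : Submodule ℂ (EuclideanSpace ℂ (Fin n)), T ≤ S ∧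
    Module.finrank ℂ T = i ∧ ∀ v ∈ T, v ≠ 0 → r ≤ rayleigh A v}

/-- `f(A) = ∑ j, f(λ_j) x_j x_jᴴ` as a linear operator, for eigenvalues `lam`
and orthonormal eigenvectors `x` of `A`. -/
noncomputable def matFun {n : ℕ} (lam : Fin n → ℝ)
    (x : Fin n → EuclideanSpace ℂ (Fin n)) (f : ℝ → ℝ) :
    EuclideanSpace ℂ (Fin n) →ₗ[ℂ] EuclideanSpace ℂ (Fin n) :=
  ∑ j : Fin n, (f (lam j) : ℂ) • ((innerSL ℂ (x j)).toLinearMap.smulRight (x j))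

/-- `y` is a Ritz vector of `A` in `S` associated with the Ritz value `η`:
`y ∈ S`, `y ≠ 0`, `ρ(y) = η` and `Ay − ηy ⊥ S`. -/
def IsRitzVector {n : ℕ} (A : Matrix (Fin n) (Fin n) ℂ)
    (S : Submodule ℂ (EuclideanSpace ℂ (Fin n))) (η : ℝ)
    (y : EuclideanSpace ℂ (Fin n)) : Prop :=
  y ∈ S ∧ y ≠ 0 ∧ rayleigh A y = η ∧
    ∀ v ∈ S, (inner ℂ v (Matrix.toEuclideanLin A y - (η : ℂ) • y) : ℂ) = 0

/-- If `λ_l ≥ ρ(u) ≥ λ_{l+1}` and the eigenvector components of `v`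
dominate those of `u` for `j ≤ l` while being dominated for `j > l`, then
`ρ(v) ≥ ρ(u)`.  (0-indexed: `lam ⟨j⟩` is `λ_{j+1}`.) -/
theorem stmt2 {n : ℕ}
    (A : Matrix (Fin n) (Fin n) ℂ) (hA : A.IsHermitian)
    (lam : Fin n → ℝ) (hlam : Antitone lam)
    (x : Fin n → EuclideanSpace ℂ (Fin n)) (hx : Orthonormal ℂ x)
    (heig : ∀ j, Matrix.toEuclideanLin A (x j) = (lam j : ℂ) • x j)
    (u v : EuclideanSpace ℂ (Fin n)) (hu : u ≠ 0) (hv : v ≠ 0)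
    (l : ℕ) (hl1 : 1 ≤ l) (hln : l < n)
    (hup : rayleigh A u ≤ lam ⟨l - 1, by omega⟩)
    (hlo : lam ⟨l, hln⟩ ≤ rayleigh A u)
    (h1 : ∀ j : Fin n, (j : ℕ) < l → ‖(inner ℂ (x j) u : ℂ)‖ ≤ ‖(inner ℂ (x j) v : ℂ)‖)
    (h2 : ∀ j : Fin n, l ≤ (j : ℕ) → ‖(inner ℂ (x j) v : ℂ)‖ ≤ ‖(inner ℂ (x j) u : ℂ)‖) :
    rayleigh A u ≤ rayleigh A v := by
  have hne : Nonempty (Fin n) := ⟨⟨l, hln⟩⟩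
  -- orthonormal basis
  have hcard : Fintype.card (Fin n) = Module.finrank ℂ (EuclideanSpace ℂ (Fin n)) := by simp
  let b0 := basisOfOrthonormalOfCardEqFinrank hx hcard
  have hb0 : ⇑b0 = x := coe_basisOfOrthonormalOfCardEqFinrank hx hcard
  have hspan : ⊤ ≤ Submodule.span ℂ (Set.range x) := by
    rw [← hb0]; exact b0.span_eq.ge
  let b : OrthonormalBasis (Fin n) ℂ (EuclideanSpace ℂ (Fin n)) := OrthonormalBasis.mk hx hspan
  have hb : ⇑b = x := OrthonormalBasis.coe_mk hx hspan
  have hrepr : ∀ w : EuclideanSpace ℂ (Fin n), ∑ j, (inner ℂ (x j) w : ℂ) • x j = w := by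
    intro w
    have := b.sum_repr' w
    simpa [hb] using this
  have hAw : ∀ w : EuclideanSpace ℂ (Fin n),
      Matrix.toEuclideanLin A w = ∑ j, ((inner ℂ (x j) w : ℂ) * (lam j : ℂ)) • x j := by
    intro w
    conv_lhs => rw [← hrepr w]
    rw [map_sum]
    refine Finset.sum_congr rfl fun j _ => ?_
    rw [LinearMap.map_smul, heig, smul_smul]
  have hnum : ∀ w : EuclideanSpace ℂ (Fin n),
      ((inner ℂ w (Matrix.toEuclideanLin A w) : ℂ)).re
        = ∑ j, lam j * ‖(inner ℂ (x j) w : ℂ)‖ ^ 2 := by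
    intro w
    rw [hAw w, inner_sum]
    rw [Complex.re_sum]
    refine Finset.sum_congr rfl fun j _ => ?_
    rw [inner_smul_right, ← inner_conj_symm w (x j)]
    have : (inner ℂ (x j) w : ℂ) * (lam j : ℂ) * (starRingEnd ℂ) (inner ℂ (x j) w : ℂ)
        = (lam j : ℂ) * ((inner ℂ (x j) w : ℂ) * (starRingEnd ℂ) (inner ℂ (x j) w : ℂ)) := by ring
    rw [this, Complex.mul_conj, ← Complex.ofReal_mul, Complex.ofReal_re,
      Complex.normSq_eq_norm_sq]
  have hnorm : ∀ w : EuclideanSpace ℂ (Fin n),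
      ‖w‖ ^ 2 = ∑ j, ‖(inner ℂ (x j) w : ℂ)‖ ^ 2 := by
    intro w
    rw [← b.repr.norm_map w, EuclideanSpace.norm_eq, Real.sq_sqrt (by positivity)]
    refine Finset.sum_congr rfl fun j _ => ?_
    rw [b.repr_apply_apply, hb]
  set ρ := rayleigh A u with hρ
  have hnu : (0:ℝ) < ‖u‖ ^ 2 := pow_pos (norm_pos_iff.mpr hu) 2
  have hnv : (0:ℝ) < ‖v‖ ^ 2 := pow_pos (norm_pos_iff.mpr hv) 2
  have hun : ((inner ℂ u (Matrix.toEuclideanLin A u) : ℂ)).re = ρ * ‖u‖ ^ 2 := by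
    rw [hρ]; unfold rayleigh; field_simp
  have key : ∑ j, (lam j - ρ) * ‖(inner ℂ (x j) u : ℂ)‖ ^ 2
      ≤ ∑ j, (lam j - ρ) * ‖(inner ℂ (x j) v : ℂ)‖ ^ 2 := by
    refine Finset.sum_le_sum fun j _ => ?_
    rcases lt_or_ge (j : ℕ) l with hj | hj
    · have hjρ : ρ ≤ lam j := by
        refine le_trans hup (hlam ?_)
        exact Fin.mk_le_mk.mpr (by omega)
      have hsq : ‖(inner ℂ (x j) u : ℂ)‖ ^ 2 ≤ ‖(inner ℂ (x j) v : ℂ)‖ ^ 2 :=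
        pow_le_pow_left₀ (norm_nonneg _) (h1 j hj) 2
      exact mul_le_mul_of_nonneg_left hsq (by linarith)
    · have hjρ : lam j ≤ ρ := by
        refine le_trans (hlam ?_) hlo
        exact Fin.mk_le_mk.mpr hj
      have hsq : ‖(inner ℂ (x j) v : ℂ)‖ ^ 2 ≤ ‖(inner ℂ (x j) u : ℂ)‖ ^ 2 :=
        pow_le_pow_left₀ (norm_nonneg _) (h2 j hj) 2
      exact mul_le_mul_of_nonpos_left hsq (by linarith)
  have hkeyu : ∑ j, (lam j - ρ) * ‖(inner ℂ (x j) u : ℂ)‖ ^ 2 = 0 := by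
    have : ∑ j, (lam j - ρ) * ‖(inner ℂ (x j) u : ℂ)‖ ^ 2
        = (∑ j, lam j * ‖(inner ℂ (x j) u : ℂ)‖ ^ 2) - ρ * ∑ j, ‖(inner ℂ (x j) u : ℂ)‖ ^ 2 := by
      rw [Finset.mul_sum, ← Finset.sum_sub_distrib]
      exact Finset.sum_congr rfl fun j _ => by ring
    rw [this, ← hnum u, ← hnorm u, hun]; ring
  have hkeyv : ρ * ‖v‖ ^ 2 ≤ ((inner ℂ v (Matrix.toEuclideanLin A v) : ℂ)).re := by
    have h := key
    rw [hkeyu] at h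
    have : ∑ j, (lam j - ρ) * ‖(inner ℂ (x j) v : ℂ)‖ ^ 2
        = (∑ j, lam j * ‖(inner ℂ (x j) v : ℂ)‖ ^ 2) - ρ * ∑ j, ‖(inner ℂ (x j) v : ℂ)‖ ^ 2 := by
      rw [Finset.mul_sum, ← Finset.sum_sub_distrib]
      exact Finset.sum_congr rfl fun j _ => by ring
    rw [this, ← hnum v, ← hnorm v] at h
    linarith
  show ρ ≤ rayleigh A v
  unfold rayleigh
  rw [le_div_iff₀ hnv]
  exact hkeyv
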